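/- Block decomposition of Hidden Linear Function solutions: let α, β be finite types, let A be a symmetric matrix over ZMod 4 indexed by α ⊕ β with all entries 0 or 1 and with A(inl i, inr j) = 0 and A(inr j, inl i) = 0 for all i : α, j : β, and let b : α ⊕ β → ZMod 4. Let A₁, b₁ (resp. A₂, b₂) be the restrictions to α (resp. β), with quadratic forms q, q₁, q₂. Then p : α ⊕ β → Bool is an HLF solution for (A, b) if and only if p∘inl is an HLF solution for (A₁, b₁) and p∘inr is an HLF solution for (A₂, b₂). -/

import Mathlib

/-- Lift of a Boolean to `{0,1} ⊆ ZMod 4`. -/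
def b4 (u : Bool) : ZMod 4 := if u then 1 else 0

/-- Lift of a Boolean to `{0,1} ⊆ ZMod 2`. -/
def b2 (u : Bool) : ZMod 2 := if u then 1 else 0

/-- Lift of `ZMod 2` to `{0,1} ⊆ ZMod 4`. -/
def lift24 (t : ZMod 2) : ZMod 4 := (t.val : ZMod 4)

/-- The quadratic form `q(u) = uᵀ A u + bᵀ u` over `ZMod 4`, on Boolean vectors. -/
def qform {ι : Type} [Fintype ι] (A : Matrix ι ι (ZMod 4)) (b : ι → ZMod 4)
    (u : ι → Bool) : ZMod 4 :=
  (∑ i, ∑ j, A i j * b4 (u i) * b4 (u j)) + ∑ i, b i * b4 (u i)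

/-- The hidden linear subspace `L_q = {u | ∀ v, q(u ⊕ v) = q(u) + q(v)}`. -/
def Lq {ι : Type} [Fintype ι] (A : Matrix ι ι (ZMod 4)) (b : ι → ZMod 4) :
    Set (ι → Bool) :=
  {u | ∀ v, qform A b (fun i => xor (u i) (v i)) = qform A b u + qform A b v}

/-- `p` is a solution of the Hidden Linear Function problem for `(A, b)` if
`q(u) = 2⟨p,u⟩` for every `u ∈ L_q`, where `⟨p,u⟩` is the mod-2 inner product. -/
def IsHLFSolution {ι : Type} [Fintype ι] (A : Matrix ι ι (ZMod 4)) (b : ι → ZMod 4)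
    (p : ι → Bool) : Prop :=
  ∀ u ∈ Lq A b, qform A b u = 2 * lift24 (∑ i, b2 (p i) * b2 (u i))

-- aux lemmas
lemma lift24_two_mul_add : ∀ s t : ZMod 2,
    2 * lift24 (s + t) = 2 * lift24 s + 2 * lift24 t := by decide

lemma qform_zero {ι : Type} [Fintype ι] (A : Matrix ι ι (ZMod 4)) (b : ι → ZMod 4) :
    qform A b (fun _ => false) = 0 := by simp [qform, b4]

section blocks
variable {α β : Type} [Fintype α] [Fintype β]
  (A : Matrix (α ⊕ β) (α ⊕ β) (ZMod 4)) (b : α ⊕ β → ZMod 4)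

lemma qform_split
    (hblock₁ : ∀ (i : α) (j : β), A (Sum.inl i) (Sum.inr j) = 0)
    (hblock₂ : ∀ (i : α) (j : β), A (Sum.inr j) (Sum.inl i) = 0)
    (u : α ⊕ β → Bool) :
    qform A b u =
      qform (fun i j => A (Sum.inl i) (Sum.inl j)) (fun i => b (Sum.inl i)) (u ∘ Sum.inl)
      + qform (fun i j => A (Sum.inr i) (Sum.inr j)) (fun i => b (Sum.inr i)) (u ∘ Sum.inr) := by
  simp [qform, Fintype.sum_sum_type, hblock₁, hblock₂, Finset.sum_add_distrib]
  ring

lemma Lq_split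
    (hblock₁ : ∀ (i : α) (j : β), A (Sum.inl i) (Sum.inr j) = 0)
    (hblock₂ : ∀ (i : α) (j : β), A (Sum.inr j) (Sum.inl i) = 0)
    (u : α ⊕ β → Bool) :
    u ∈ Lq A b ↔
      (u ∘ Sum.inl ∈ Lq (fun i j => A (Sum.inl i) (Sum.inl j)) (fun i => b (Sum.inl i)) ∧
       u ∘ Sum.inr ∈ Lq (fun i j => A (Sum.inr i) (Sum.inr j)) (fun i => b (Sum.inr i))) := by
  constructor
  · intro h
    constructor
    · intro v₁
      have := h (Sum.elim v₁ (fun (_ : β) => false))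
      rw [qform_split A b hblock₁ hblock₂, qform_split A b hblock₁ hblock₂,
        qform_split A b hblock₁ hblock₂] at this
      have h2 : ((fun i => xor (u i) (Sum.elim v₁ (fun (_ : β) => false) i)) ∘ Sum.inr)
          = u ∘ Sum.inr := by funext i; simp
      have h0 : (Sum.elim v₁ (fun (_ : β) => false) ∘ Sum.inr : β → Bool) = fun _ => false := rfl
      rw [h2, h0, qform_zero (fun i j => A (Sum.inr i) (Sum.inr j)) (fun i => b (Sum.inr i))] at this
      have h1 : ((fun i => xor (u i) (Sum.elim v₁ (fun (_ : β) => false) i)) ∘ Sum.inl)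
          = fun i => xor (u (Sum.inl i)) (v₁ i) := rfl
      rw [h1] at this
      have h3 : (Sum.elim v₁ (fun (_ : β) => false) ∘ Sum.inl : α → Bool) = v₁ := rfl
      rw [h3] at this
      simp only [Function.comp_apply] at this ⊢
      linear_combination this
    · intro v₂
      have := h (Sum.elim (fun (_ : α) => false) v₂)
      rw [qform_split A b hblock₁ hblock₂, qform_split A b hblock₁ hblock₂,
        qform_split A b hblock₁ hblock₂] at this
      have h2 : ((fun i => xor (u i) (Sum.elim (fun (_ : α) => false) v₂ i)) ∘ Sum.inl)
          = u ∘ Sum.inl := by funext i; simp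
      have h0 : (Sum.elim (fun (_ : α) => false) v₂ ∘ Sum.inl : α → Bool) = fun _ => false := rfl
      rw [h2, h0, qform_zero (fun i j => A (Sum.inl i) (Sum.inl j)) (fun i => b (Sum.inl i))] at this
      have h1 : ((fun i => xor (u i) (Sum.elim (fun (_ : α) => false) v₂ i)) ∘ Sum.inr)
          = fun i => xor (u (Sum.inr i)) (v₂ i) := rfl
      rw [h1] at this
      have h3 : (Sum.elim (fun (_ : α) => false) v₂ ∘ Sum.inr : β → Bool) = v₂ := rfl
      rw [h3] at this
      simp only [Function.comp_apply] at this ⊢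
      linear_combination this
  · rintro ⟨h1, h2⟩ v
    rw [qform_split A b hblock₁ hblock₂, qform_split A b hblock₁ hblock₂,
      qform_split A b hblock₁ hblock₂]
    have c1 : ((fun i => xor (u i) (v i)) ∘ Sum.inl : α → Bool)
        = fun i => xor (u (Sum.inl i)) (v (Sum.inl i)) := rfl
    have c2 : ((fun i => xor (u i) (v i)) ∘ Sum.inr : β → Bool)
        = fun i => xor (u (Sum.inr i)) (v (Sum.inr i)) := rfl
    rw [c1, c2]
    have e1 := h1 (v ∘ Sum.inl)
    have e2 := h2 (v ∘ Sum.inr)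
    simp only [Function.comp_apply] at e1 e2 ⊢
    linear_combination e1 + e2

end blocks


/-- Block decomposition of Hidden Linear Function solutions: for a block-diagonal symmetric
`{0,1}`-matrix `A` over `ZMod 4` indexed by `α ⊕ β`, a vector `p` is an HLF solution for
`(A, b)` iff its restrictions are HLF solutions for the two blocks. -/
theorem hlf_solution_block_decomposition {α β : Type} [Fintype α] [Fintype β]
    (A : Matrix (α ⊕ β) (α ⊕ β) (ZMod 4)) (b : α ⊕ β → ZMod 4)
    (hA01 : ∀ i j, A i j = 0 ∨ A i j = 1)
    (hAsymm : ∀ i j, A i j = A j i)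
    (hblock₁ : ∀ (i : α) (j : β), A (Sum.inl i) (Sum.inr j) = 0)
    (hblock₂ : ∀ (i : α) (j : β), A (Sum.inr j) (Sum.inl i) = 0)
    (p : α ⊕ β → Bool) :
    IsHLFSolution A b p ↔
      (IsHLFSolution (fun i j => A (Sum.inl i) (Sum.inl j)) (fun i => b (Sum.inl i))
          (p ∘ Sum.inl) ∧
       IsHLFSolution (fun i j => A (Sum.inr i) (Sum.inr j)) (fun i => b (Sum.inr i))
          (p ∘ Sum.inr)) := by
  constructor
  · intro h
    constructor
    · intro u₁ hu₁
      have hmem : (Sum.elim u₁ (fun (_ : β) => false) : α ⊕ β → Bool) ∈ Lq A b := by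
        rw [Lq_split A b hblock₁ hblock₂]
        exact ⟨hu₁, fun v => by simp [qform_zero (fun i j => A (Sum.inr i) (Sum.inr j)) (fun i => b (Sum.inr i))]⟩
      have := h _ hmem
      rw [qform_split A b hblock₁ hblock₂] at this
      simp only [Sum.elim_comp_inl, Sum.elim_comp_inr, qform_zero (fun i j => A (Sum.inr i) (Sum.inr j)) (fun i => b (Sum.inr i)), add_zero] at this
      rw [this]
      congr 1
      congr 1
      rw [Fintype.sum_sum_type]
      simp [b2]
      exact Finset.sum_congr rfl fun i _ => by split_ifs <;> simp_all
    · intro u₂ hu₂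
      have hmem : (Sum.elim (fun (_ : α) => false) u₂ : α ⊕ β → Bool) ∈ Lq A b := by
        rw [Lq_split A b hblock₁ hblock₂]
        exact ⟨fun v => by simp [qform_zero (fun i j => A (Sum.inl i) (Sum.inl j)) (fun i => b (Sum.inl i))], hu₂⟩
      have := h _ hmem
      rw [qform_split A b hblock₁ hblock₂] at this
      simp only [Sum.elim_comp_inl, Sum.elim_comp_inr, qform_zero (fun i j => A (Sum.inl i) (Sum.inl j)) (fun i => b (Sum.inl i)), zero_add] at this
      rw [this]
      congr 1
      congr 1
      rw [Fintype.sum_sum_type]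
      simp [b2]
      exact Finset.sum_congr rfl fun i _ => by split_ifs <;> simp_all
  · rintro ⟨h1, h2⟩ u hu
    rw [Lq_split A b hblock₁ hblock₂] at hu
    rw [qform_split A b hblock₁ hblock₂, h1 _ hu.1, h2 _ hu.2,
      ← lift24_two_mul_add]
    congr 1
    congr 1
    rw [Fintype.sum_sum_type]
    simp [Function.comp]
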